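/- Assume additionally that Q(μ(x,y),z) = −Q(μ(x,z),y) for all x, y, z ∈ V, and that P is diagonal in the basis (e_u), i.e. P e_u = x_u e_u with x_u > 0. Then for every g-orthonormal basis (X_i) of V and all indices u, v: −(1/2)·Σ_i g(μ(X_i, e_u), μ(X_i, e_v)) + (1/4)·Σ_{i,j} g(μ(X_i, X_j), e_u)·g(μ(X_i, X_j), e_v) = Σ_{r,k} ((x_u x_v − 2 x_k²)/(4 x_r x_k))·Γ_{rk}^u Γ_{rk}^v. -/

import Mathlib

open scoped RealInnerProductSpace

/-- if moreover `Q(μ(x,y),z) = -Q(μ(x,z),y)` and `P` is diagonal in the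
`Q`-orthonormal basis `(e_u)`, i.e. `P e_u = x_u e_u` with `x_u > 0`, then for every
`g`-orthonormal basis `(X_i)` the Ricci-type expression equals
`Σ_{r,k} ((x_u x_v − 2 x_k²)/(4 x_r x_k))·Γ_{rk}^u Γ_{rk}^v`. -/
theorem ricci_formula_diagonal_metric
    {V : Type*} [NormedAddCommGroup V] [InnerProductSpace ℝ V] [FiniteDimensional ℝ V]
    {ι : Type*} [Fintype ι] [DecidableEq ι]
    (μ : V →ₗ[ℝ] V →ₗ[ℝ] V)
    (P : V →ₗ[ℝ] V)
    (hPsymm : ∀ x y : V, ⟪P x, y⟫ = ⟪x, P y⟫)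
    (hPpos : ∀ x : V, x ≠ 0 → 0 < ⟪P x, x⟫)
    (e : Module.Basis ι ℝ V) (he : Orthonormal ℝ (e : ι → V))
    (hskew : ∀ x y z : V, ⟪μ x y, z⟫ = -⟪μ x z, y⟫)
    (x : ι → ℝ) (hx : ∀ u, 0 < x u)
    (hPdiag : ∀ u, P (e u) = x u • e u) :
    ∀ X : Module.Basis ι ℝ V,
      (∀ i j, ⟪P (X i), X j⟫ = if i = j then (1 : ℝ) else 0) →
      ∀ u v : ι,
        -(1 / 2 : ℝ) * ∑ i, ⟪P (μ (X i) (e u)), μ (X i) (e v)⟫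
          + (1 / 4 : ℝ) * ∑ i, ∑ j,
              ⟪P (μ (X i) (X j)), e u⟫ * ⟪P (μ (X i) (X j)), e v⟫
        = ∑ r, ∑ k, ((x u * x v - 2 * (x k) ^ 2) / (4 * x r * x k))
            * ⟪μ (e r) (e k), e u⟫ * ⟪μ (e r) (e k), e v⟫ := by
  intro X hX u v
  classical
  have hxne : ∀ k, x k ≠ 0 := fun k => (hx k).ne'
  -- expansion in the Q-orthonormal basis e
  have hexp : ∀ y : V, y = ∑ k, ⟪y, e k⟫ • e k := by
    intro y
    have h := (e.toOrthonormalBasis he).sum_repr' y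
    simp only [Module.Basis.coe_toOrthonormalBasis] at h
    conv_lhs => rw [← h]
    exact Finset.sum_congr rfl fun k _ => by rw [real_inner_comm]
  set c : ι → ι → ℝ := fun i k => ⟪X i, e k⟫ with hc
  have hXexp : ∀ i, X i = ∑ k, c i k • e k := fun i => hexp (X i)
  have hPe : ∀ (y : V) (k : ι), ⟪P y, e k⟫ = x k * ⟪y, e k⟫ := by
    intro y k
    rw [hPsymm, hPdiag, real_inner_smul_right]
  -- the g-orthonormality rewritten in coordinates
  have hg : ∀ i j, (∑ k, c j k * (x k * c i k)) = if i = j then (1:ℝ) else 0 := by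
    intro i j
    have h := hX i j
    rw [hXexp j] at h
    simp only [inner_sum, real_inner_smul_right, hPe] at h
    exact h
  -- orthogonality relations for the coefficient matrix
  have horth : ∀ k l, (∑ i, c i k * c i l) = if k = l then (x k)⁻¹ else 0 := by
    have hMN : (Matrix.of fun i k => c i k) * (Matrix.of fun k j => x k * c j k) = 1 := by
      ext i j
      rw [Matrix.mul_apply, Matrix.one_apply, ← hg i j]
      exact Finset.sum_congr rfl fun k _ => by simp only [Matrix.of_apply]; ring
    have hNM := mul_eq_one_comm.mp hMN
    intro k l
    have h := congrFun (congrFun hNM k) l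
    rw [Matrix.mul_apply, Matrix.one_apply] at h
    simp only [Matrix.of_apply] at h
    apply mul_left_cancel₀ (hxne k)
    rw [Finset.mul_sum]
    rw [show (∑ i, x k * (c i k * c i l)) = ∑ i, x k * c i k * c i l by
      exact Finset.sum_congr rfl fun i _ => by ring]
    rw [h]
    split
    · rw [mul_inv_cancel₀ (hxne k)]
    · rw [mul_zero]
  -- key trace-invariance lemma
  have key : ∀ F : V → V → ℝ,
      (∀ i, F (X i) (X i) = ∑ k, ∑ l, c i k * c i l * F (e k) (e l)) →
      (∑ i, F (X i) (X i)) = ∑ k, (x k)⁻¹ * F (e k) (e k) := by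
    intro F hF
    calc (∑ i, F (X i) (X i))
        = ∑ i, ∑ k, ∑ l, c i k * c i l * F (e k) (e l) :=
          Finset.sum_congr rfl fun i _ => hF i
      _ = ∑ k, ∑ l, (∑ i, c i k * c i l) * F (e k) (e l) := by
          rw [Finset.sum_comm]
          refine Finset.sum_congr rfl fun k _ => ?_
          rw [Finset.sum_comm]
          refine Finset.sum_congr rfl fun l _ => ?_
          rw [Finset.sum_mul]
      _ = ∑ k, (x k)⁻¹ * F (e k) (e k) := by
          refine Finset.sum_congr rfl fun k _ => ?_
          simp only [horth, ite_mul, zero_mul]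
          rw [Finset.sum_ite_eq]
          simp
  -- first sum
  have hF1 : ∀ i, ⟪P (μ (X i) (e u)), μ (X i) (e v)⟫
      = ∑ k, ∑ l, c i k * c i l * ⟪P (μ (e k) (e u)), μ (e l) (e v)⟫ := by
    intro i
    conv_lhs => rw [hXexp i]
    simp only [map_sum, map_smul, LinearMap.sum_apply, LinearMap.smul_apply,
      sum_inner, inner_sum, real_inner_smul_left, real_inner_smul_right]
    rw [Finset.sum_comm]
    exact Finset.sum_congr rfl fun k _ => Finset.sum_congr rfl fun l _ => by ring
  have hT1 : (∑ i, ⟪P (μ (X i) (e u)), μ (X i) (e v)⟫)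
      = ∑ k, (x k)⁻¹ * ⟪P (μ (e k) (e u)), μ (e k) (e v)⟫ :=
    key (fun a b => ⟪P (μ a (e u)), μ b (e v)⟫) hF1
  -- expand the diagonal first-sum term
  have hA : ∀ k, ⟪P (μ (e k) (e u)), μ (e k) (e v)⟫
      = ∑ m, x m * (⟪μ (e k) (e m), e u⟫ * ⟪μ (e k) (e m), e v⟫) := by
    intro k
    conv_lhs => rw [hexp (μ (e k) (e u))]
    simp only [map_sum, map_smul, sum_inner, real_inner_smul_left]
    refine Finset.sum_congr rfl fun m _ => ?_
    rw [hPdiag, real_inner_smul_left]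
    rw [real_inner_comm (μ (e k) (e v)) (e m)]
    rw [hskew (e k) (e u) (e m), hskew (e k) (e v) (e m)]
    ring
  -- second sum, stage 1 (sum over i, j fixed)
  have hT2a : ∀ j, (∑ i, ⟪P (μ (X i) (X j)), e u⟫ * ⟪P (μ (X i) (X j)), e v⟫)
      = ∑ k, (x k)⁻¹ * (⟪P (μ (e k) (X j)), e u⟫ * ⟪P (μ (e k) (X j)), e v⟫) := by
    intro j
    refine key (fun a b => ⟪P (μ a (X j)), e u⟫ * ⟪P (μ b (X j)), e v⟫) ?_
    intro i
    conv_lhs => rw [hXexp i]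
    simp only [map_sum, map_smul, LinearMap.sum_apply, LinearMap.smul_apply,
      sum_inner, real_inner_smul_left]
    rw [Finset.sum_mul_sum]
    exact Finset.sum_congr rfl fun k _ => Finset.sum_congr rfl fun l _ => by ring
  -- second sum, stage 2 (sum over j, k fixed)
  have hT2b : ∀ k, (∑ j, ⟪P (μ (e k) (X j)), e u⟫ * ⟪P (μ (e k) (X j)), e v⟫)
      = ∑ l, (x l)⁻¹ * (⟪P (μ (e k) (e l)), e u⟫ * ⟪P (μ (e k) (e l)), e v⟫) := by
    intro k
    refine key (fun a b => ⟪P (μ (e k) a), e u⟫ * ⟪P (μ (e k) b), e v⟫) ?_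
    intro j
    conv_lhs => rw [hXexp j]
    simp only [map_sum, map_smul, sum_inner, real_inner_smul_left]
    rw [Finset.sum_mul_sum]
    exact Finset.sum_congr rfl fun k _ => Finset.sum_congr rfl fun l _ => by ring
  have hT2 : (∑ i, ∑ j, ⟪P (μ (X i) (X j)), e u⟫ * ⟪P (μ (X i) (X j)), e v⟫)
      = ∑ k, ∑ l, (x k)⁻¹ * ((x l)⁻¹ *
          ((x u * ⟪μ (e k) (e l), e u⟫) * (x v * ⟪μ (e k) (e l), e v⟫))) := by
    rw [Finset.sum_comm]
    calc (∑ j, ∑ i, ⟪P (μ (X i) (X j)), e u⟫ * ⟪P (μ (X i) (X j)), e v⟫)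
        = ∑ j, ∑ k, (x k)⁻¹ * (⟪P (μ (e k) (X j)), e u⟫ * ⟪P (μ (e k) (X j)), e v⟫) :=
          Finset.sum_congr rfl fun j _ => hT2a j
      _ = ∑ k, (x k)⁻¹ * ∑ j, ⟪P (μ (e k) (X j)), e u⟫ * ⟪P (μ (e k) (X j)), e v⟫ := by
          rw [Finset.sum_comm]
          exact Finset.sum_congr rfl fun k _ => by rw [Finset.mul_sum]
      _ = ∑ k, ∑ l, (x k)⁻¹ * ((x l)⁻¹ *
            ((x u * ⟪μ (e k) (e l), e u⟫) * (x v * ⟪μ (e k) (e l), e v⟫))) := by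
          refine Finset.sum_congr rfl fun k _ => ?_
          rw [hT2b k, Finset.mul_sum]
          refine Finset.sum_congr rfl fun l _ => ?_
          rw [hPe, hPe]
  -- put everything together
  rw [hT1, hT2]
  rw [show (∑ k, (x k)⁻¹ * ⟪P (μ (e k) (e u)), μ (e k) (e v)⟫)
      = ∑ k, ∑ m, (x k)⁻¹ * (x m * (⟪μ (e k) (e m), e u⟫ * ⟪μ (e k) (e m), e v⟫)) by
    refine Finset.sum_congr rfl fun k _ => ?_
    rw [hA k, Finset.mul_sum]]
  rw [Finset.mul_sum, Finset.mul_sum, ← Finset.sum_add_distrib]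
  refine Finset.sum_congr rfl fun r _ => ?_
  rw [Finset.mul_sum, Finset.mul_sum, ← Finset.sum_add_distrib]
  refine Finset.sum_congr rfl fun k _ => ?_
  field_simp [hxne r, hxne k]
  ring
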